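/- Correctness of asynchronous FloodSet (zero present, guaranteed delivery): consider a run of the FloodSet global machine of dimension n satisfying the guarantee-of-delivery property (if any automaton broadcasts message a at step i, then every automaton k performs the reaction ā at some step l ≥ i). If some automaton broadcasts 0 at some step, then eventually every automaton is in state o₀ and remains there forever. -/
import Mathlib


/-- States of the FloodSet protocol. -/
inductive FState where
  | i0 | i1 | o0 | o1
deriving DecidableEq

/-- Actions: broadcasts `b0, b1` (messages 0,1) and reactions `r0, r1` (0̄, 1̄). -/
inductive FAct where
  | b0 | b1 | r0 | r1
deriving DecidableEq

/-- The FloodSet transition relation. -/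
def ftau (q : FState) (a : FAct) (r : FState) : Prop :=
  (q = .i0 ∧ a = .b0 ∧ r = .o0) ∨
  (q = .o0 ∧ a = .r0 ∧ r = .o0) ∨
  (q = .o0 ∧ a = .r1 ∧ r = .o0) ∨
  (q = .i1 ∧ a = .b1 ∧ r = .o1) ∨
  (q = .o1 ∧ a = .r0 ∧ r = .o0) ∨
  (q = .o1 ∧ a = .r1 ∧ r = .o1)

/-- correctness of asynchronous FloodSet with guaranteed delivery:
in a run satisfying guarantee of delivery (if any automaton broadcasts message
`a` at step `i`, then every automaton `k` performs the reaction `ā` at some step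
`l ≥ i`), if some automaton broadcasts 0, then eventually every automaton is in
state `o₀` and remains there forever. -/
theorem stmt_12 (n : ℕ)
    (s : ℕ → Fin n → FState) (σ : ℕ → Fin n → Option FAct)
    (hrun : ∀ i j, (∀ a, σ i j = some a → ftau (s i j) a (s (i + 1) j)) ∧
      (σ i j = none → s i j = s (i + 1) j))
    (hdeliver0 : ∀ i j, σ i j = some .b0 → ∀ k, ∃ l, i ≤ l ∧ σ l k = some .r0)
    (hdeliver1 : ∀ i j, σ i j = some .b1 → ∀ k, ∃ l, i ≤ l ∧ σ l k = some .r1)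
    (hsent : ∃ i j, σ i j = some .b0) :
    ∃ t, ∀ l, t ≤ l → ∀ j, s l j = .o0 := by
  obtain ⟨i, j, hij⟩ := hsent
  choose l hl hσ using hdeliver0 i j hij
  have stay : ∀ (k : Fin n) m m', s m k = .o0 → m ≤ m' → s m' k = .o0 := by
    intro k m m' h hle
    induction m', hle using Nat.le_induction with
    | base => exact h
    | succ m' hle ih =>
      obtain ⟨h1, h2⟩ := hrun m' k
      cases hσ' : σ m' k with
      | none => rw [← h2 hσ', ih]
      | some a =>
        have := h1 a hσ'
        rw [ih] at this
        rcases this with ⟨h,_⟩|⟨_,_,h⟩|⟨_,_,h⟩|⟨h,_⟩|⟨h,_⟩|⟨h,_⟩ <;> simp_all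
  have step : ∀ k : Fin n, s (l k + 1) k = .o0 := by
    intro k
    have := (hrun (l k) k).1 _ (hσ k)
    rcases this with ⟨_,h,_⟩|⟨_,_,h⟩|⟨_,h,_⟩|⟨_,h,_⟩|⟨_,_,h⟩|⟨_,h,_⟩ <;> simp_all
  refine ⟨(Finset.univ.sup fun k => l k) + 1, fun m hm k => ?_⟩
  exact stay k _ m (step k)
    (le_trans (Nat.succ_le_succ (Finset.le_sup (Finset.mem_univ k))) hm)
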